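/- For a directed path Π from (k,1) to (m,n) in the lattice, the descent level sets D_{iℓ} = { j : π_{ij} = ℓ > π_{i+1,j} } for (i,ℓ) ∈ Π are pairwise disjoint, and consequently the sum of d_{iℓ} = |D_{iℓ}| over (i,ℓ) ∈ Π is at most λ_k, the number of positive entries in row k of π. -/

import Mathlib

open scoped BigOperators

/-- A plane partition: an ℕ-matrix (indexed from 0) with finitely many nonzero
entries, weakly decreasing along rows and columns. -/
structure PlanePartition where
  entry : ℕ → ℕ → ℕ
  finite_support : (Function.support fun p : ℕ × ℕ => entry p.1 p.2).Finite
  row_dec : ∀ i j, entry i (j + 1) ≤ entry i j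
  col_dec : ∀ i j, entry (i + 1) j ≤ entry i j

/-- `c_ℓ(π)`: the number of columns of `π` containing the entry `ℓ`. -/
noncomputable def colCount (π : PlanePartition) (ℓ : ℕ) : ℕ :=
  {j | ∃ i, π.entry i j = ℓ}.ncard

/-- `d_{iℓ}`: the number of columns `j` with `π_{ij} = ℓ > π_{i+1,j}` (row `i` indexed from 0,
`ℓ` an actual entry value). -/
noncomputable def dstat (π : PlanePartition) (i ℓ : ℕ) : ℕ :=
  {j | π.entry i j = ℓ ∧ π.entry (i + 1) j < ℓ}.ncard

/-- `λ_k`: the number of positive entries in row `k` (indexed from 0) of `π`. -/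
noncomputable def part (π : PlanePartition) (k : ℕ) : ℕ :=
  {j | 0 < π.entry k j}.ncard

/-- `π` has shape `λ` (with `λ : ℕ → ℕ` indexed from 0). -/
def HasShape (π : PlanePartition) (lam : ℕ → ℕ) : Prop :=
  ∀ k, part π k = lam k

/-- `λ` is an integer partition with at most `m` parts (indexed from 0). -/
def IsPartWithParts (m : ℕ) (lam : ℕ → ℕ) : Prop :=
  Antitone lam ∧ ∀ i, m ≤ i → lam i = 0

/-- The dual Grothendieck polynomial
`g_λ(x_1,…,x_n) = Σ_{π : sh(π) = λ, entries ≤ n} ∏_i x_i^{c_i(π)}`. -/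
noncomputable def dualG (lam : ℕ → ℕ) (n : ℕ) (x : Fin n → ℝ) : ℝ :=
  ∑' π : {π : PlanePartition // HasShape π lam ∧ ∀ i j, π.entry i j ≤ n},
    ∏ ℓ : Fin n, x ℓ ^ colCount π.1 (ℓ.1 + 1)

/-- A unit step of a directed lattice path. -/
def IsStep (a b : ℕ × ℕ) : Prop :=
  b = (a.1 + 1, a.2) ∨ b = (a.1, a.2 + 1)

/-- `p` is a directed lattice path from `s` to `t`. -/
def IsDirPath (p : List (ℕ × ℕ)) (s t : ℕ × ℕ) : Prop :=
  p.head? = some s ∧ p.getLast? = some t ∧ p.Chain' IsStep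

/-- The sum of the weights `W` along the path `p`. -/
def pathSum (W : ℕ → ℕ → ℕ) (p : List (ℕ × ℕ)) : ℕ :=
  (p.map fun a => W a.1 a.2).sum

/-- Last-passage time from `s` to `(m, n)` for the weight matrix `W` (1-indexed). -/
noncomputable def lpt (W : ℕ → ℕ → ℕ) (s : ℕ × ℕ) (m n : ℕ) : ℕ :=
  sSup {v | ∃ p, IsDirPath p s (m, n) ∧ v = pathSum W p}

/-- Extend an `m × n` matrix (indexed from 0) to a 1-indexed matrix on `ℕ × ℕ`, zero outside. -/
def ext (m n : ℕ) (w : Fin m → Fin n → ℕ) : ℕ → ℕ → ℕ := fun i j =>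
  if hi : i - 1 < m then if hj : j - 1 < n then w ⟨i - 1, hi⟩ ⟨j - 1, hj⟩ else 0 else 0

/-- Probability weight of a fixed `m × n` matrix of outcomes under independent geometric
entries: entry in column `ℓ` takes value `k` with probability `(1 - q_ℓ) q_ℓ^k`. -/
noncomputable def geomWt {m n : ℕ} (q : Fin n → ℝ) (w : Fin m → Fin n → ℕ) : ℝ :=
  ∏ i : Fin m, ∏ ℓ : Fin n, (1 - q ℓ) * q ℓ ^ w i ℓ

/-- Probability of an event `E` for an `m × n` matrix of independent geometric entries
with column parameters `q`. -/
noncomputable def geomProb {m n : ℕ} (q : Fin n → ℝ) (E : Set (Fin m → Fin n → ℕ)) : ℝ :=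
  ∑' w : E, geomWt q w.1

/-- The complete homogeneous symmetric polynomial `h_a(x_1,…,x_N)`: the sum of all
monomials of degree `a`. -/
noncomputable def hpoly (a N : ℕ) (x : Fin N → ℝ) : ℝ :=
  ∑ f ∈ Finset.univ.filter (fun f : Fin a → Fin N => ∀ i j, i ≤ j → f i ≤ f j),
    ∏ t, x (f t)

/-- `h` with an integer index, vanishing for negative degrees. -/
noncomputable def hpolyZ (a : ℤ) (N : ℕ) (x : Fin N → ℝ) : ℝ :=
  if 0 ≤ a then hpoly a.toNat N x else 0

/-- The Schur polynomial of `λ` (at most `m` parts) via the Jacobi–Trudi determinant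
`s_λ = det[h_{λ_i - i + j}]_{i,j=1}^m`. -/
noncomputable def schur (lam : ℕ → ℕ) (m N : ℕ) (x : Fin N → ℝ) : ℝ :=
  Matrix.det (Matrix.of fun i j : Fin m =>
    hpolyZ ((lam i.1 : ℤ) - (i.1 + 1) + (j.1 + 1)) N x)

/-- The rectangular partition `(a^m)` as a function `ℕ → ℕ`. -/
def rectPart (a m : ℕ) : ℕ → ℕ := fun k => if k < m then a else 0


private lemma sum_ncard_le_aux {α β : Type*} (f : α → Set β) :
    ∀ (l : List α) (S : Set β), S.Finite → (∀ a ∈ l, f a ⊆ S) →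
      l.Pairwise (fun a b => Disjoint (f a) (f b)) →
      (l.map fun a => (f a).ncard).sum ≤ S.ncard
  | [], S, _, _, _ => by simp
  | a :: l, S, hS, hsub, hpw => by
    simp only [List.map_cons, List.sum_cons]
    have hfa : f a ⊆ S := hsub a List.mem_cons_self
    have hdisj := (List.pairwise_cons.mp hpw).1
    have hrest : ∀ b ∈ l, f b ⊆ S \ f a := by
      intro b hb x hx
      exact ⟨hsub b (List.mem_cons_of_mem _ hb) hx,
        fun hxa => (hdisj b hb).ne_of_mem hxa hx rfl⟩
    have ih := sum_ncard_le_aux f l (S \ f a) hS.diff hrest (List.pairwise_cons.mp hpw).2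
    have heq : (S \ f a).ncard + (f a).ncard = S.ncard :=
      Set.ncard_diff_add_ncard_of_subset hfa hS
    omega

/-- along a directed path `Π` from `(k,1)` to `(m,n)` the descent level
sets `D_{iℓ} = {j : π_{ij} = ℓ > π_{i+1,j}}` are pairwise disjoint, and consequently
`Σ_{(i,ℓ) ∈ Π} d_{iℓ} ≤ λ_k` (1-indexed coordinates). -/
theorem stmt3 (π : PlanePartition) (m n k : ℕ) (hk1 : 1 ≤ k) (hkm : k ≤ m)
    (hrows : ∀ i j, m ≤ i → π.entry i j = 0)
    (hent : ∀ i j, π.entry i j ≤ n)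
    (p : List (ℕ × ℕ)) (hp : IsDirPath p (k, 1) (m, n)) :
    p.Pairwise (fun a b =>
      Disjoint {j | π.entry (a.1 - 1) j = a.2 ∧ π.entry a.1 j < a.2}
               {j | π.entry (b.1 - 1) j = b.2 ∧ π.entry b.1 j < b.2}) ∧
    pathSum (fun i ℓ => dstat π (i - 1) ℓ) p ≤ part π (k - 1) := by
  obtain ⟨hhead, hlast, hchain⟩ := hp
  obtain ⟨t, rfl⟩ : ∃ t, p = (k, 1) :: t := by
    cases p with
    | nil => simp at hhead
    | cons b t =>
      refine ⟨t, ?_⟩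
      simp only [List.head?_cons, Option.some.injEq] at hhead
      rw [hhead]
  -- the entry function is antitone in the row index
  have hmono : ∀ j i i', i ≤ i' → π.entry i' j ≤ π.entry i j := fun j =>
    antitone_nat_of_succ_le (fun n => π.col_dec n j)
  set R : ℕ × ℕ → ℕ × ℕ → Prop :=
    fun a b => a.1 ≤ b.1 ∧ a.2 ≤ b.2 ∧ a.1 + a.2 < b.1 + b.2 with hR
  haveI : IsTrans (ℕ × ℕ) R := ⟨fun a b c hab hbc =>
    ⟨hab.1.trans hbc.1, hab.2.1.trans hbc.2.1, hab.2.2.trans hbc.2.2⟩⟩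
  have hstep : ∀ a b : ℕ × ℕ, IsStep a b → R a b := by
    rintro a b (rfl | rfl) <;> exact ⟨by omega, by omega, by omega⟩
  have hchainR : ((k, 1) :: t).Chain' R := hchain.imp hstep
  have hpwR : ((k, 1) :: t).Pairwise R := List.isChain_iff_pairwise.mp hchainR
  set D : ℕ × ℕ → Set ℕ :=
    fun a => {j | π.entry (a.1 - 1) j = a.2 ∧ π.entry a.1 j < a.2} with hD
  have hdisj : ∀ a b : ℕ × ℕ, R a b → Disjoint (D a) (D b) := by
    intro a b hab
    rw [Set.disjoint_left]
    rintro j ⟨ha1, ha2⟩ ⟨hb1, hb2⟩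
    rcases eq_or_lt_of_le hab.1 with heq | hlt
    · have : a.2 < b.2 := by omega
      rw [heq] at ha1
      omega
    · have h1 : a.1 ≤ b.1 - 1 := by omega
      have h2 : π.entry (b.1 - 1) j ≤ π.entry a.1 j := hmono j _ _ h1
      omega
  constructor
  · exact hpwR.imp (fun h => hdisj _ _ h)
  · -- every point on the path has coordinates ≥ (k, 1)
    have hk : ∀ a ∈ (k, 1) :: t, k ≤ a.1 ∧ 1 ≤ a.2 := by
      intro a ha
      rcases List.mem_cons.mp ha with rfl | ha
      · simp
      · have := (List.pairwise_cons.mp hpwR).1 a ha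
        exact ⟨this.1, this.2.1⟩
    set S : Set ℕ := {j | 0 < π.entry (k - 1) j} with hS
    have hSfin : S.Finite := by
      have : S ⊆ (fun j => ((k - 1 : ℕ), j)) ⁻¹'
          (Function.support fun p : ℕ × ℕ => π.entry p.1 p.2) := by
        intro j hj
        simpa [Function.mem_support] using hj.ne'
      have hpre : ((fun j => ((k - 1 : ℕ), j)) ⁻¹'
          (Function.support fun p : ℕ × ℕ => π.entry p.1 p.2)).Finite :=
        π.finite_support.preimage (fun x _ y _ hxy => by simpa using hxy)
      exact hpre.subset this
    have hsub : ∀ a ∈ (k, 1) :: t, D a ⊆ S := by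
      intro a ha j hj
      obtain ⟨hk1a, hk2a⟩ := hk a ha
      have h1 : π.entry (a.1 - 1) j = a.2 := hj.1
      have h2 : k - 1 ≤ a.1 - 1 := by omega
      have := hmono j _ _ h2
      simp only [hS, Set.mem_setOf_eq]
      omega
    have hpwD : ((k, 1) :: t).Pairwise (fun a b => Disjoint (D a) (D b)) :=
      hpwR.imp (fun h => hdisj _ _ h)
    have hmap : (((k, 1) :: t).map fun a => dstat π (a.1 - 1) a.2) =
        ((k, 1) :: t).map fun a => (D a).ncard := by
      apply List.map_congr_left
      intro a ha
      have h1 : a.1 - 1 + 1 = a.1 := by have := (hk a ha).1; omega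
      simp only [dstat, hD, h1]
    calc pathSum (fun i ℓ => dstat π (i - 1) ℓ) ((k, 1) :: t)
        = (((k, 1) :: t).map fun a => (D a).ncard).sum := by
          unfold pathSum; rw [hmap]
      _ ≤ S.ncard := sum_ncard_le_aux D _ S hSfin hsub hpwD
      _ = part π (k - 1) := rfl
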